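/- The odds functional θ is unbounded on every Hellinger ball: for every mixing distribution Q on (0,∞) and every ε > 0, sup{ θ(f_G) : G a mixing distribution with h(f_Q, f_G) ≤ ε } = ∞, where h is the Hellinger distance between the truncated mixture densities. -/

import Mathlib

open MeasureTheory

open scoped ENNReal

/-- Truncated Poisson mixture probability `f_Q(x) = ∫ λ^x/(x!(e^λ-1)) dQ(λ)`. -/
noncomputable def truncPMF (Q : Measure ℝ) (x : ℕ) : ℝ :=
  ∫ l, l ^ x / (Nat.factorial x * (Real.exp l - 1)) ∂Q

/-- The odds functional `θ(f_Q) = ∫ (e^λ - 1)⁻¹ dQ(λ)`. -/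
noncomputable def odds (Q : Measure ℝ) : ℝ :=
  ∫ l, (Real.exp l - 1)⁻¹ ∂Q

section Aux

lemma expm1_pos {l : ℝ} (hl : 0 < l) : (0:ℝ) < Real.exp l - 1 := by
  have := Real.add_one_lt_exp (x := l) (by linarith); linarith

lemma term_le {l : ℝ} (hl : 0 < l) (k : ℕ) :
    l ^ (k+1) / (k+1).factorial ≤ Real.exp l - 1 := by
  have h := Real.sum_le_exp_of_nonneg hl.le (k+2)
  have hsub : ({0, k+1} : Finset ℕ) ⊆ Finset.range (k+2) := by
    intro i hi; simp at hi; rcases hi with h|h <;> simp [h]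
  have h2 : (∑ i ∈ ({0, k+1} : Finset ℕ), l ^ i / i.factorial)
      ≤ ∑ i ∈ Finset.range (k+2), l ^ i / i.factorial := by
    apply Finset.sum_le_sum_of_subset_of_nonneg hsub
    intro i _ _; positivity
  rw [Finset.sum_pair (by omega)] at h2
  simp at h2
  linarith

lemma f_nonneg {l : ℝ} (hl : 0 < l) (k : ℕ) :
    0 ≤ l ^ (k+1) / ((k+1).factorial * (Real.exp l - 1)) := by
  have := expm1_pos hl; positivity

lemma f_le_one {l : ℝ} (hl : 0 < l) (k : ℕ) :
    l ^ (k+1) / ((k+1).factorial * (Real.exp l - 1)) ≤ 1 := by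
  have hE := expm1_pos hl
  rw [div_le_one (by positivity)]
  have := term_le hl k
  have hf : (0:ℝ) < ((k+1).factorial : ℝ) := by positivity
  calc l ^ (k+1) ≤ (k+1).factorial * (l ^ (k+1) / (k+1).factorial) := by field_simp; exact le_rfl
    _ ≤ (k+1).factorial * (Real.exp l - 1) := mul_le_mul_of_nonneg_left this hf.le

lemma partial_sum_le {l : ℝ} (hl : 0 < l) (N : ℕ) :
    ∑ x ∈ Finset.range N, l ^ (x+1) / ((x+1).factorial * (Real.exp l - 1)) ≤ 1 := by
  have hE := expm1_pos hl
  have key : ∑ x ∈ Finset.range N, l ^ (x+1) / ((x+1).factorial : ℝ) ≤ Real.exp l - 1 := by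
    have h := Real.sum_le_exp_of_nonneg hl.le (N+1)
    rw [Finset.sum_range_succ'] at h
    simp at h
    linarith
  have heq : ∑ x ∈ Finset.range N, l ^ (x+1) / ((x+1).factorial * (Real.exp l - 1))
      = (∑ x ∈ Finset.range N, l ^ (x+1) / ((x+1).factorial : ℝ)) / (Real.exp l - 1) := by
    rw [Finset.sum_div]; congr 1; ext x; rw [div_div]
  rw [heq, div_le_one hE]; exact key

lemma sqrt_sub_sq_le {a b : ℝ} (ha : 0 ≤ a) (hb : 0 ≤ b) :
    (Real.sqrt a - Real.sqrt b) ^ 2 ≤ |a - b| := by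
  rcases le_total a b with h | h
  · rw [abs_of_nonpos (by linarith)]
    nlinarith [Real.sq_sqrt ha, Real.sq_sqrt hb, Real.sqrt_nonneg a, Real.sqrt_nonneg b,
      Real.sqrt_le_sqrt h]
  · rw [abs_of_nonneg (by linarith)]
    nlinarith [Real.sq_sqrt ha, Real.sq_sqrt hb, Real.sqrt_nonneg a, Real.sqrt_nonneg b,
      Real.sqrt_le_sqrt h]

lemma f_meas (k : ℕ) :
    Measurable (fun l : ℝ => l ^ (k+1) / ((k+1).factorial * (Real.exp l - 1))) := by
  apply Measurable.div <;> fun_prop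

lemma integrable_dirac' {f : ℝ → ℝ} (hf : Measurable f) (c : ℝ) :
    Integrable f (Measure.dirac c) := by
  apply Integrable.mono' (integrable_const ‖f c‖) hf.aestronglyMeasurable
  rw [MeasureTheory.ae_dirac_eq]; simp

lemma integral_mix (Q : Measure ℝ) [IsProbabilityMeasure Q] (δ c s : ℝ)
    (hs0 : 0 < s) (hs1 : s ≤ 1)
    {f : ℝ → ℝ} (hf : Measurable f) (hfi : Integrable f (Q.restrict (Set.Ioi δ))) :
    ∫ l, f l ∂((1 - ENNReal.ofReal s) • Q.restrict (Set.Ioi δ)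
        + (1 - (1 - ENNReal.ofReal s) * Q (Set.Ioi δ)) • Measure.dirac c)
      = (1 - s) * ∫ l, f l ∂(Q.restrict (Set.Ioi δ))
        + (1 - (1 - s) * (Q (Set.Ioi δ)).toReal) * f c := by
  set s' : ℝ≥0∞ := ENNReal.ofReal s with hs'
  have hmul_le : (1 - s') * Q (Set.Ioi δ) ≤ 1 := mul_le_one' tsub_le_self prob_le_one
  have h1s : (1 - s').toReal = 1 - s := by
    rw [hs', ← ENNReal.ofReal_one, ← ENNReal.ofReal_sub _ hs0.le,
      ENNReal.toReal_ofReal (by linarith)]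
  have hwR : (1 - (1 - s') * Q (Set.Ioi δ)).toReal = 1 - (1 - s) * (Q (Set.Ioi δ)).toReal := by
    rw [ENNReal.toReal_sub_of_le hmul_le (by simp), ENNReal.toReal_mul, h1s]; simp
  rw [integral_add_measure (hfi.smul_measure (by simp [hs']))
      ((integrable_dirac' hf c).smul_measure (ne_top_of_le_ne_top ENNReal.one_ne_top tsub_le_self)),
    integral_smul_measure, integral_smul_measure, integral_dirac, h1s, hwR,
    smul_eq_mul, smul_eq_mul]

end Aux

/-- The odds functional is unbounded on every Hellinger ball:
for every mixing distribution `Q` on `(0,∞)` and every `ε > 0`, the supremum of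
`θ(f_G)` over mixing distributions `G` with `h(f_Q, f_G) ≤ ε` is infinite, i.e.
for every `M` there is such a `G` with `θ(f_G) ≥ M`. -/
theorem odds_unbounded_on_hellinger_ball
    (Q : Measure ℝ) [IsProbabilityMeasure Q] (hQ : Q (Set.Ioi (0:ℝ))ᶜ = 0)
    (ε : ℝ) (hε : 0 < ε) (M : ℝ) :
    ∃ G : Measure ℝ, IsProbabilityMeasure G ∧ G (Set.Ioi (0:ℝ))ᶜ = 0 ∧
      (∑' x : ℕ, (Real.sqrt (truncPMF Q (x + 1)) - Real.sqrt (truncPMF G (x + 1))) ^ 2)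
        ≤ ε ^ 2 ∧
      M ≤ odds G := by
  classical
  set s : ℝ := min (ε^2/4) 1 with hsdef
  have hs0 : 0 < s := lt_min (by positivity) one_pos
  have hs1 : s ≤ 1 := min_le_right _ _
  have hs4 : 4 * s ≤ ε^2 := by
    have : s ≤ ε^2/4 := min_le_left _ _
    linarith
  have hae : ∀ᵐ l ∂Q, l ∈ Set.Ioi (0:ℝ) := ae_iff.mpr (by simpa [Set.compl_def] using hQ)
  -- choose δ
  obtain ⟨δ, hδ, hQδ⟩ : ∃ δ : ℝ, 0 < δ ∧ Q (Set.Iic δ) ≤ ENNReal.ofReal s := by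
    have hmono : Antitone (fun n : ℕ => Set.Ioc (0:ℝ) (1/(n+1))) := by
      intro m n hmn
      apply Set.Ioc_subset_Ioc_right
      have : (m:ℝ) ≤ n := by exact_mod_cast hmn
      gcongr
    have hempty : ⋂ n : ℕ, Set.Ioc (0:ℝ) (1/(n+1)) = ∅ := by
      ext l; simp only [Set.mem_iInter, Set.mem_Ioc, Set.mem_empty_iff_false, iff_false]
      intro h
      obtain ⟨n, hn⟩ := exists_nat_one_div_lt (h 0).1
      exact absurd ((h n).2) (not_le.mpr hn)
    have htendsto := MeasureTheory.tendsto_measure_iInter_atTop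
        (μ := Q) (s := fun n : ℕ => Set.Ioc (0:ℝ) (1/(n+1)))
        (fun n => measurableSet_Ioc.nullMeasurableSet) hmono ⟨0, measure_ne_top _ _⟩
    rw [hempty] at htendsto
    simp only [measure_empty] at htendsto
    have hlt : ∀ᶠ n : ℕ in Filter.atTop, Q (Set.Ioc (0:ℝ) (1/(n+1))) < ENNReal.ofReal s :=
      htendsto.eventually_lt_const (by simpa using hs0)
    obtain ⟨n, hn⟩ := hlt.exists
    refine ⟨1/(n+1), by positivity, ?_⟩
    have hsubset : Set.Iic (1/(n+1):ℝ) ⊆ Set.Ioc (0:ℝ) (1/(n+1)) ∪ Set.Iic (0:ℝ) := by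
      intro x hx
      simp only [Set.mem_Iic] at hx
      rcases le_or_gt x 0 with h|h
      · exact Or.inr h
      · exact Or.inl ⟨h, hx⟩
    have h0 : Q (Set.Iic (0:ℝ)) = 0 := by rw [← Set.compl_Ioi]; exact hQ
    calc Q (Set.Iic (1/(n+1):ℝ)) ≤ Q (Set.Ioc (0:ℝ) (1/(n+1))) + Q (Set.Iic (0:ℝ)) :=
          le_trans (measure_mono hsubset) (measure_union_le _ _)
      _ ≤ ENNReal.ofReal s := by rw [h0, add_zero]; exact hn.le
  -- the atom
  set M' : ℝ := max M 1 with hM'def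
  have hM' : (0:ℝ) < M' := lt_of_lt_of_le one_pos (le_max_right _ _)
  set c : ℝ := Real.log (1 + s / M') with hcdef
  have hpos : (0:ℝ) < 1 + s / M' := by positivity
  have hc : 0 < c := Real.log_pos (by rw [lt_add_iff_pos_right]; positivity)
  have hec : Real.exp c - 1 = s / M' := by rw [hcdef, Real.exp_log hpos]; ring
  -- the mixture
  set s' : ℝ≥0∞ := ENNReal.ofReal s with hs'
  set w' : ℝ≥0∞ := 1 - (1 - s') * Q (Set.Ioi δ) with hw'
  set G : Measure ℝ := (1 - s') • Q.restrict (Set.Ioi δ) + w' • Measure.dirac c with hG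
  have hmul_le : (1 - s') * Q (Set.Ioi δ) ≤ 1 := mul_le_one' tsub_le_self prob_le_one
  have hGprob : IsProbabilityMeasure G := by
    constructor
    rw [hG]
    simp only [Measure.add_apply, Measure.smul_apply, smul_eq_mul]
    rw [Measure.restrict_apply_univ, Measure.dirac_apply_of_mem (Set.mem_univ c), mul_one]
    exact add_tsub_cancel_of_le hmul_le
  have hGsupp : G (Set.Ioi (0:ℝ))ᶜ = 0 := by
    rw [hG]
    simp only [Measure.add_apply, Measure.smul_apply, smul_eq_mul]
    rw [Measure.restrict_apply measurableSet_Ioi.compl]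
    have h1 : (Set.Ioi (0:ℝ))ᶜ ∩ Set.Ioi δ = ∅ := by
      ext x
      simp only [Set.mem_inter_iff, Set.mem_compl_iff, Set.mem_Ioi, Set.mem_empty_iff_false,
        iff_false, not_and, not_lt]
      intro hx; linarith
    have h2 : Measure.dirac c (Set.Ioi (0:ℝ))ᶜ = 0 := by
      rw [Measure.dirac_apply]
      simp [Set.indicator_apply, hc]
    rw [h1, measure_empty, mul_zero, zero_add, h2, mul_zero]
  -- real-valued weights
  set sR : ℝ := (Q (Set.Ioi δ)ᶜ).toReal with hsRdef
  set wR : ℝ := 1 - (1 - s) * (Q (Set.Ioi δ)).toReal with hwRdef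
  have hQδt : (Q (Set.Ioi δ)).toReal = 1 - sR := by
    have := measure_add_measure_compl (μ := Q) (s := Set.Ioi δ) measurableSet_Ioi
    rw [measure_univ] at this
    have h := congrArg ENNReal.toReal this
    rw [ENNReal.toReal_add (measure_ne_top _ _) (measure_ne_top _ _)] at h
    simp at h
    rw [hsRdef, Set.compl_Ioi]; linarith
  have hsR0 : 0 ≤ sR := ENNReal.toReal_nonneg
  have hsRs : sR ≤ s := by
    rw [hsRdef, Set.compl_Ioi]
    calc (Q (Set.Iic δ)).toReal ≤ (ENNReal.ofReal s).toReal :=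
          ENNReal.toReal_mono ENNReal.ofReal_ne_top hQδ
      _ = s := ENNReal.toReal_ofReal hs0.le
  have hwR_eq : wR = s + sR - s * sR := by rw [hwRdef, hQδt]; ring
  have hwR_ge : s ≤ wR := by nlinarith
  have hwR_le : wR ≤ s + sR := by nlinarith
  have hwR0 : 0 ≤ wR := le_trans hs0.le hwR_ge
  -- integrability basics
  have hInt : ∀ x : ℕ,
      Integrable (fun l : ℝ => l ^ (x+1) / ((x+1).factorial * (Real.exp l - 1))) Q := by
    intro x
    apply Integrable.mono' (integrable_const 1) (f_meas x).aestronglyMeasurable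
    filter_upwards [hae] with l hl
    rw [Real.norm_eq_abs, abs_of_nonneg (f_nonneg hl x)]
    exact f_le_one hl x
  set a' : ℕ → ℝ := fun x =>
    ∫ l, l ^ (x+1) / ((x+1).factorial * (Real.exp l - 1)) ∂(Q.restrict (Set.Ioi δ)) with ha'def
  set r : ℕ → ℝ := fun x =>
    ∫ l, l ^ (x+1) / ((x+1).factorial * (Real.exp l - 1)) ∂(Q.restrict (Set.Ioi δ)ᶜ) with hrdef
  set g : ℕ → ℝ := fun x => c ^ (x+1) / ((x+1).factorial * (Real.exp c - 1)) with hgdef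
  have haeR : ∀ᵐ l ∂(Q.restrict (Set.Ioi δ)), l ∈ Set.Ioi (0:ℝ) := ae_restrict_of_ae hae
  have haeRc : ∀ᵐ l ∂(Q.restrict (Set.Ioi δ)ᶜ), l ∈ Set.Ioi (0:ℝ) := ae_restrict_of_ae hae
  have ha : ∀ x : ℕ, truncPMF Q (x+1) = a' x + r x := by
    intro x
    rw [truncPMF, ha'def, hrdef]
    rw [← integral_add_measure ((hInt x).restrict) ((hInt x).restrict),
      Measure.restrict_add_restrict_compl measurableSet_Ioi]
  have hb : ∀ x : ℕ, truncPMF G (x+1) = (1-s) * a' x + wR * g x := by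
    intro x
    rw [truncPMF, hG, integral_mix Q δ c s hs0 hs1 (f_meas x) ((hInt x).restrict)]
  -- nonnegativity
  have ha'0 : ∀ x, 0 ≤ a' x := fun x =>
    integral_nonneg_of_ae (by filter_upwards [haeR] with l hl; exact f_nonneg hl x)
  have hr0 : ∀ x, 0 ≤ r x := fun x =>
    integral_nonneg_of_ae (by filter_upwards [haeRc] with l hl; exact f_nonneg hl x)
  have hg0 : ∀ x, 0 ≤ g x := fun x => f_nonneg hc x
  -- partial sum bounds
  have hpartial : ∀ (ν : Measure ℝ), ν ≤ Q → (∀ᵐ l ∂ν, l ∈ Set.Ioi (0:ℝ)) →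
      (∀ x, Integrable (fun l : ℝ => l ^ (x+1) / ((x+1).factorial * (Real.exp l - 1))) ν) →
      ∀ N : ℕ, ∑ x ∈ Finset.range N,
        (∫ l, l ^ (x+1) / ((x+1).factorial * (Real.exp l - 1)) ∂ν) ≤ (ν Set.univ).toReal := by
    intro ν hν haeν hIntν N
    haveI : IsFiniteMeasure ν := ⟨lt_of_le_of_lt (Measure.le_iff'.1 hν Set.univ) (measure_lt_top Q _)⟩
    rw [← integral_finset_sum _ (fun x _ => hIntν x)]
    calc (∫ l, ∑ x ∈ Finset.range N, l ^ (x+1) / ((x+1).factorial * (Real.exp l - 1)) ∂ν)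
        ≤ ∫ _, (1:ℝ) ∂ν := by
          apply integral_mono_ae (integrable_finset_sum _ (fun x _ => hIntν x)) (integrable_const 1)
          filter_upwards [haeν] with l hl
          exact partial_sum_le hl N
      _ = (ν Set.univ).toReal := by rw [integral_const, smul_eq_mul, mul_one]; rfl
  have hresle : Q.restrict (Set.Ioi δ) ≤ Q := Measure.restrict_le_self
  have hresle' : Q.restrict (Set.Ioi δ)ᶜ ≤ Q := Measure.restrict_le_self
  have hpa' : ∀ N, ∑ x ∈ Finset.range N, a' x ≤ 1 := by
    intro N
    calc ∑ x ∈ Finset.range N, a' x ≤ ((Q.restrict (Set.Ioi δ)) Set.univ).toReal :=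
          hpartial _ hresle haeR (fun x => (hInt x).restrict) N
      _ ≤ 1 := by
          rw [Measure.restrict_apply_univ]
          exact ENNReal.toReal_le_of_le_ofReal one_pos.le (by simpa using prob_le_one)
  have hpr : ∀ N, ∑ x ∈ Finset.range N, r x ≤ sR := by
    intro N
    calc ∑ x ∈ Finset.range N, r x ≤ ((Q.restrict (Set.Ioi δ)ᶜ) Set.univ).toReal :=
          hpartial _ hresle' haeRc (fun x => (hInt x).restrict) N
      _ = sR := by rw [Measure.restrict_apply_univ]
  have hpg : ∀ N, ∑ x ∈ Finset.range N, g x ≤ 1 := fun N => partial_sum_le hc N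
  -- summability
  have hsa' : Summable a' := summable_of_sum_range_le ha'0 hpa'
  have hsr : Summable r := summable_of_sum_range_le hr0 hpr
  have hsg : Summable g := summable_of_sum_range_le hg0 hpg
  have hta' : ∑' x, a' x ≤ 1 := Summable.tsum_le_of_sum_range_le hsa' hpa'
  have htr : ∑' x, r x ≤ sR := Summable.tsum_le_of_sum_range_le hsr hpr
  have htg : ∑' x, g x ≤ 1 := Summable.tsum_le_of_sum_range_le hsg hpg
  -- the dominating sequence
  set D : ℕ → ℝ := fun x => s * a' x + (r x + wR * g x) with hDdef
  have hsD : Summable D := ((hsa'.mul_left s).add ((hsr).add (hsg.mul_left wR)))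
  have htD : ∑' x, D x ≤ s + (sR + wR) := by
    rw [hDdef, Summable.tsum_add (hsa'.mul_left s) (hsr.add (hsg.mul_left wR)),
      Summable.tsum_add hsr (hsg.mul_left wR), tsum_mul_left, tsum_mul_left]
    have h1 : s * ∑' x, a' x ≤ s := by
      calc s * ∑' x, a' x ≤ s * 1 := by
            apply mul_le_mul_of_nonneg_left hta' hs0.le
        _ = s := mul_one s
    have h2 : wR * ∑' x, g x ≤ wR := by
      calc wR * ∑' x, g x ≤ wR * 1 := mul_le_mul_of_nonneg_left htg hwR0
        _ = wR := mul_one wR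
    linarith
  -- termwise Hellinger bound
  have hterm : ∀ x : ℕ,
      (Real.sqrt (truncPMF Q (x+1)) - Real.sqrt (truncPMF G (x+1))) ^ 2 ≤ D x := by
    intro x
    have haQ0 : 0 ≤ truncPMF Q (x+1) := by rw [ha x]; exact add_nonneg (ha'0 x) (hr0 x)
    have hbG0 : 0 ≤ truncPMF G (x+1) := by
      rw [hb x]
      exact add_nonneg (mul_nonneg (by linarith) (ha'0 x)) (mul_nonneg hwR0 (hg0 x))
    calc (Real.sqrt (truncPMF Q (x+1)) - Real.sqrt (truncPMF G (x+1))) ^ 2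
        ≤ |truncPMF Q (x+1) - truncPMF G (x+1)| := sqrt_sub_sq_le haQ0 hbG0
      _ ≤ D x := by
          have hDx : D x = s * a' x + (r x + wR * g x) := rfl
          have h1 : 0 ≤ s * a' x := mul_nonneg hs0.le (ha'0 x)
          have h2 : 0 ≤ wR * g x := mul_nonneg hwR0 (hg0 x)
          have h3 := hr0 x
          have hid : (1 - s) * a' x = a' x - s * a' x := by ring
          rw [ha x, hb x, hDx, abs_le]
          constructor
          · linarith
          · linarith
  have hsumh : Summable (fun x : ℕ =>
      (Real.sqrt (truncPMF Q (x+1)) - Real.sqrt (truncPMF G (x+1))) ^ 2) :=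
    Summable.of_nonneg_of_le (fun x => sq_nonneg _) hterm hsD
  have hhell : (∑' x : ℕ, (Real.sqrt (truncPMF Q (x+1)) - Real.sqrt (truncPMF G (x+1))) ^ 2)
      ≤ ε ^ 2 := by
    calc (∑' x : ℕ, (Real.sqrt (truncPMF Q (x+1)) - Real.sqrt (truncPMF G (x+1))) ^ 2)
        ≤ ∑' x, D x := Summable.tsum_le_tsum hterm hsumh hsD
      _ ≤ s + (sR + wR) := htD
      _ ≤ 4 * s := by linarith
      _ ≤ ε ^ 2 := hs4
  -- odds bound
  have hinvmeas : Measurable (fun l : ℝ => (Real.exp l - 1)⁻¹) := by fun_prop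
  have haeRδ : ∀ᵐ l ∂(Q.restrict (Set.Ioi δ)), l ∈ Set.Ioi δ :=
    ae_restrict_mem measurableSet_Ioi
  have hinvint : Integrable (fun l : ℝ => (Real.exp l - 1)⁻¹) (Q.restrict (Set.Ioi δ)) := by
    apply Integrable.mono' (integrable_const ((Real.exp δ - 1)⁻¹)) hinvmeas.aestronglyMeasurable
    filter_upwards [haeRδ] with l hl
    have hl' : δ < l := hl
    have hEδ := expm1_pos hδ
    have hEl : (0:ℝ) < Real.exp l - 1 := expm1_pos (hδ.trans hl')
    rw [Real.norm_eq_abs, abs_of_nonneg (by positivity)]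
    apply inv_anti₀ hEδ
    have := Real.exp_le_exp.mpr hl'.le
    linarith
  have hodds : odds G = (1-s) * (∫ l, (Real.exp l - 1)⁻¹ ∂(Q.restrict (Set.Ioi δ)))
      + wR * (Real.exp c - 1)⁻¹ := by
    rw [odds, hG, integral_mix Q δ c s hs0 hs1 hinvmeas hinvint]
  have hI0 : 0 ≤ ∫ l, (Real.exp l - 1)⁻¹ ∂(Q.restrict (Set.Ioi δ)) := by
    apply integral_nonneg_of_ae
    filter_upwards [haeR] with l hl
    have := expm1_pos hl
    positivity
  have hoddsge : M ≤ odds G := by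
    have hinv : (Real.exp c - 1)⁻¹ = M' / s := by
      rw [hec]; rw [inv_div]
    have h1 : wR * (Real.exp c - 1)⁻¹ ≥ M' := by
      rw [hinv]
      have : s * (M' / s) = M' := by field_simp
      calc wR * (M' / s) ≥ s * (M' / s) := by
            apply mul_le_mul_of_nonneg_right hwR_ge (by positivity)
        _ = M' := this
    have h2 : (0:ℝ) ≤ (1-s) * (∫ l, (Real.exp l - 1)⁻¹ ∂(Q.restrict (Set.Ioi δ))) :=
      mul_nonneg (by linarith) hI0
    have hMM' : M ≤ M' := le_max_left _ _
    rw [hodds]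
    linarith
  exact ⟨G, hGprob, hGsupp, hhell, hoddsge⟩
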